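/- Let R be a ring, F an additive covariant functor from left R-modules to abelian groups, and A a left R-module. There is an isomorphism of abelian groups Nat(F, Hom(A,-)) ≅ Hom_R(A, w(F)), natural in both F and A, where w(F) = Nat(F, Hom(R,-)) is made into a left R-module by ((r•η)_M(x))(s) := (η_M(x))(s·r) for r, s ∈ R, x ∈ F(M). In other words, the defect w and the contravariant Yoneda embedding form a right adjoint pair. -/

import Mathlib

open CategoryTheory Opposite

universe u

variable {R : Type u} [Ring R]

/-- The forgetful functor `Hom(R,-)`. -/
def forgetfulFunctor (R : Type u) [Ring R] : ModuleCat.{u} R ⥤ AddCommGrpCat.{u} :=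
  preadditiveCoyoneda.obj (op (ModuleCat.of R R))

/-- An element of the value of the forgetful functor, viewed as a linear map `R → M`. -/
def toHom {M : ModuleCat.{u} R} (x : (forgetfulFunctor R).obj M) :
    ModuleCat.of R R ⟶ M := x

/-- Right multiplication by `r` as an endomorphism of the regular module. -/
def rmul (r : R) : ModuleCat.of R R ⟶ ModuleCat.of R R :=
  ModuleCat.ofHom (LinearMap.toSpanSingleton R R r)

variable {F : ModuleCat.{u} R ⥤ AddCommGrpCat.{u}}

theorem defect_ext {η ξ : F ⟶ forgetfulFunctor R}
    (h : ∀ (M : ModuleCat.{u} R) (x : F.obj M) (s : R),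
      toHom (η.app M x) s = toHom (ξ.app M x) s) : η = ξ := by
  apply NatTrans.ext
  funext M
  apply AddCommGrpCat.ext
  intro x
  exact ModuleCat.hom_ext (LinearMap.ext fun s => h M x s)

theorem smul_app' (r : R) (η : F ⟶ forgetfulFunctor R) (M : ModuleCat.{u} R)
    (x : F.obj M) (s : R) :
    toHom ((η ≫ preadditiveCoyoneda.map (rmul r).op).app M x) s =
      toHom (η.app M x) (s * r) := rfl

theorem add_app' (η ξ : F ⟶ forgetfulFunctor R) (M : ModuleCat.{u} R)
    (x : F.obj M) (s : R) :
    toHom ((η + ξ).app M x) s = toHom (η.app M x) s + toHom (ξ.app M x) s := rfl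

theorem zero_app' (M : ModuleCat.{u} R) (x : F.obj M) (s : R) :
    toHom ((0 : F ⟶ forgetfulFunctor R).app M x) s = 0 := rfl

/-- The left `R`-module structure on the defect `w(F) = Nat(F, Hom(R,-))`, given by
`((r • η)_M(x))(s) = (η_M(x))(s * r)`. -/
instance defectModule : Module R (F ⟶ forgetfulFunctor R) where
  smul r η := η ≫ preadditiveCoyoneda.map (rmul r).op
  one_smul η := defect_ext fun M x s => congrArg (toHom (η.app M x)) (mul_one s)
  mul_smul r r' η := defect_ext fun M x s =>
    congrArg (toHom (η.app M x)) (mul_assoc s r r').symm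
  smul_zero _ := defect_ext fun _ _ _ => rfl
  smul_add _ _ _ := defect_ext fun _ _ _ => rfl
  add_smul r r' η := defect_ext fun M x s =>
    (congrArg (toHom (η.app M x)) (mul_add s r r')).trans
      (map_add (toHom (η.app M x)).hom _ _)
  zero_smul η := defect_ext fun M x s =>
    (congrArg (toHom (η.app M x)) (mul_zero s)).trans
      (map_zero (toHom (η.app M x)).hom)

/-- The natural transformation `Hom(A,-) ⟶ Hom(R,-)` induced by `a ∈ A`, i.e. by the
map `R → A`, `r ↦ r • a`. -/
def hatNat (A : ModuleCat.{u} R) (a : A) :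
    preadditiveCoyoneda.obj (op A) ⟶ forgetfulFunctor R :=
  preadditiveCoyoneda.map (Quiver.Hom.op (ModuleCat.ofHom (LinearMap.toSpanSingleton R A a) : ModuleCat.of R R ⟶ A))

/-- An element of the value of the coyoneda functor at `A`, viewed as a linear map `A → M`. -/
def toHomA {A M : ModuleCat.{u} R} (x : (preadditiveCoyoneda.obj (op A)).obj M) :
    A ⟶ M := x

lemma comp_hatNat_apply (A : ModuleCat.{u} R) (η : F ⟶ preadditiveCoyoneda.obj (op A))
    (a : A) (M : ModuleCat.{u} R) (x : F.obj M) (s : R) :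
    toHom ((η ≫ hatNat A a).app M x) s = toHomA (η.app M x) (s • a) := rfl

theorem coyo_ext {A : ModuleCat.{u} R} {η ξ : F ⟶ preadditiveCoyoneda.obj (op A)}
    (h : ∀ (M : ModuleCat.{u} R) (x : F.obj M) (a : A),
      toHomA (η.app M x) a = toHomA (ξ.app M x) a) : η = ξ := by
  apply NatTrans.ext
  funext M
  apply AddCommGrpCat.ext
  intro x
  exact ModuleCat.hom_ext (LinearMap.ext fun a => h M x a)

/-- The inverse: from `g : A →ₗ w(F)` build a natural transformation `F ⟶ Hom(A,-)`. -/
def invNat (A : ModuleCat.{u} R) (g : ↑A →ₗ[R] (F ⟶ forgetfulFunctor R)) :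
    F ⟶ preadditiveCoyoneda.obj (op A) where
  app M := AddCommGrpCat.ofHom <| AddMonoidHom.mk' (fun x => ModuleCat.ofHom
    ({ toFun := fun a => toHom ((g a).app M x) (1 : R)
       map_add' := fun a b => by
         show toHom ((g (a + b)).app M x) (1 : R) = _
         rw [g.map_add]; rfl
       map_smul' := fun r a => by
         have h1 : g (r • a) = r • g a := g.map_smul r a
         have h2 : toHom ((r • g a).app M x) (1 : R) = toHom ((g a).app M x) (1 * r) :=
           smul_app' r (g a) M x 1
         have h3 : toHom ((g a).app M x) r = r • toHom ((g a).app M x) (1 : R) := by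
           have := (toHom ((g a).app M x)).hom.map_smul r (1 : R)
           simpa using this
         simp only [RingHom.id_apply, h1, h2, one_mul, h3] } : ↑A →ₗ[R] ↑M))
    (fun x y => ModuleCat.hom_ext <| LinearMap.ext fun a => by
      show toHom (((g a).app M) (x + y)) (1 : R) = _
      rw [map_add]
      rfl)
  naturality M N f := by
    ext x
    refine ModuleCat.hom_ext (LinearMap.ext fun a => ?_)
    have hnat : (g a).app N (F.map f x) = (forgetfulFunctor R).map f ((g a).app M x) := by
      have := (g a).naturality f
      exact ConcreteCategory.congr_hom this x
    show toHom ((g a).app N (F.map f x)) (1 : R) = _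
    rw [hnat]
    rfl


/-- the defect `w(F) = Nat(F, Hom(R,-))`, with the module structure
`((r • η)_M(x))(s) = (η_M(x))(s * r)`, and the contravariant Yoneda embedding form a
right adjoint pair: `Nat(F, Hom(A,-)) ≅ Hom_R(A, w(F))`, an isomorphism of abelian
groups natural in both `F` and `A`. -/
theorem statement5 (R : Type u) [Ring R] :
    ∃ e : (F : ModuleCat.{u} R ⥤ AddCommGrpCat.{u}) → F.Additive → (A : ModuleCat.{u} R) →
        ((F ⟶ preadditiveCoyoneda.obj (op A)) ≃+
          (↑A →ₗ[R] (F ⟶ forgetfulFunctor R))),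
      (∀ (F : ModuleCat.{u} R ⥤ AddCommGrpCat.{u}) (hF : F.Additive) (A : ModuleCat.{u} R)
          (η : F ⟶ preadditiveCoyoneda.obj (op A)) (a : A),
          e F hF A η a = η ≫ hatNat A a) ∧
      (∀ (F F' : ModuleCat.{u} R ⥤ AddCommGrpCat.{u}) (hF : F.Additive) (hF' : F'.Additive)
          (θ : F' ⟶ F) (A : ModuleCat.{u} R) (η : F ⟶ preadditiveCoyoneda.obj (op A))
          (a : A),
          e F' hF' A (θ ≫ η) a = θ ≫ e F hF A η a) ∧
      (∀ (F : ModuleCat.{u} R ⥤ AddCommGrpCat.{u}) (hF : F.Additive)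
          (A B : ModuleCat.{u} R) (f : A ⟶ B)
          (η : F ⟶ preadditiveCoyoneda.obj (op B)) (a : A),
          e F hF A (η ≫ preadditiveCoyoneda.map f.op) a = e F hF B η (f a)) := by
  refine ⟨fun F hF A =>
    { toFun := fun η =>
        { toFun := fun a => η ≫ hatNat A a
          map_add' := fun a b => defect_ext fun M x s => by
            rw [add_app', comp_hatNat_apply, comp_hatNat_apply, comp_hatNat_apply,
              smul_add, map_add]
          map_smul' := fun r a => defect_ext fun M x s => by
            rw [comp_hatNat_apply]
            show toHomA (η.app M x) (s • r • a) =
              toHom (((η ≫ hatNat A a) ≫ preadditiveCoyoneda.map (rmul r).op).app M x) s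
            rw [smul_app' r (η ≫ hatNat A a) M x s, comp_hatNat_apply, smul_smul] }
      invFun := fun g => invNat A g
      left_inv := fun η => coyo_ext fun M x a => by
        show toHom ((η ≫ hatNat A a).app M x) (1 : R) = _
        rw [comp_hatNat_apply, one_smul]
      right_inv := fun g => LinearMap.ext fun a => defect_ext fun M x s => by
        show toHom ((invNat A g ≫ hatNat A a).app M x) s = toHom ((g a).app M x) s
        rw [comp_hatNat_apply]
        show toHom ((g (s • a)).app M x) (1 : R) = toHom ((g a).app M x) s
        rw [g.map_smul, (show s • g a = (g a) ≫ preadditiveCoyoneda.map (rmul s).op from rfl),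
]
        show toHom ((g a).app M x) ((1 : R) • s) = toHom ((g a).app M x) s
        rw [one_smul]
      map_add' := fun η ξ => LinearMap.ext fun a => defect_ext fun M x s => by
        show toHom (((η + ξ) ≫ hatNat A a).app M x) s =
          toHom ((η ≫ hatNat A a + ξ ≫ hatNat A a).app M x) s
        rw [add_app', comp_hatNat_apply, comp_hatNat_apply, comp_hatNat_apply]
        rfl },
    fun F hF A η a => rfl,
    fun F F' hF hF' θ A η a => (Category.assoc θ η (hatNat A a)).symm,
    fun F hF A B f η a => ?_⟩
  show η ≫ preadditiveCoyoneda.map f.op ≫ hatNat A a = η ≫ hatNat B (f a)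
  congr 1
  exact defect_ext fun M x s => by
    show toHomA x (f (s • a)) = toHomA x (s • f a)
    rw [map_smul]
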